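/- Let K be a field of characteristic zero and let u, v : ℕ → K be sequences such that u is C-finite of order r and v is C-finite of order s. Then the sequence n ↦ u(n) · v(n) is C-finite of order at most r·s, i.e., it satisfies a C-finite recurrence of some order at most r·s. -/

import Mathlib

open Matrix Polynomial
open scoped Kronecker

section Aux
variable {K : Type*} [Field K]

/-- companion matrix for the recurrence -/
def compMat (c : ℕ → K) (r : ℕ) : Matrix (Fin r) (Fin r) K :=
  fun i j => if (i : ℕ) + 1 = r then -c j else if (j : ℕ) = (i : ℕ) + 1 then 1 else 0

lemma compMat_mulVec {c : ℕ → K} {r : ℕ} {x : ℕ → K}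
    (hx : ∀ n : ℕ, x (n + r) + ∑ i ∈ Finset.range r, c i * x (n + i) = 0) (n : ℕ) :
    compMat c r *ᵥ (fun i : Fin r => x (n + i)) = fun i : Fin r => x (n + 1 + i) := by
  funext i
  simp only [compMat, mulVec, dotProduct]
  by_cases h : (i : ℕ) + 1 = r
  · simp only [h, if_true]
    have : ∑ j : Fin r, -c j * x (n + j) = -(∑ j ∈ Finset.range r, c j * x (n + j)) := by
      rw [← Finset.sum_neg_distrib, Fin.sum_univ_eq_sum_range (fun j => -c j * x (n + j)) r]
      simp [neg_mul]
    rw [this]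
    have hn := hx n
    have : x (n + 1 + i) = x (n + r) := by
      congr 1; omega
    rw [this]
    linear_combination -hn
  · simp only [h, if_false]
    have hi : (i : ℕ) + 1 < r := by omega
    have : ∀ j : Fin r, ((if (j : ℕ) = (i : ℕ) + 1 then (1 : K) else 0) * x (n + j))
        = if j = (⟨(i : ℕ) + 1, hi⟩ : Fin r) then x (n + ((i : ℕ) + 1)) else 0 := by
      intro j
      by_cases hj : (j : ℕ) = (i : ℕ) + 1
      · have : j = (⟨(i : ℕ) + 1, hi⟩ : Fin r) := by ext; exact hj
        simp [this]
      · have : j ≠ (⟨(i : ℕ) + 1, hi⟩ : Fin r) := by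
          intro hc; apply hj; rw [hc]
        simp [hj, this]
    rw [Finset.sum_congr rfl (fun j _ => this j), Finset.sum_ite_eq']
    simp only [Finset.mem_univ, if_true]
    congr 1; omega

lemma compMat_det_ne_zero {c : ℕ → K} {r : ℕ} (hc : c 0 ≠ 0) (hr : 0 < r) :
    (compMat c r).det ≠ 0 := by
  obtain ⟨r', rfl⟩ : ∃ r', r = r' + 1 := ⟨r - 1, by omega⟩
  rw [det_succ_column_zero]
  have h1 : ∀ i : Fin (r' + 1), (-1 : K) ^ (i : ℕ) * compMat c (r' + 1) i 0 *
      ((compMat c (r' + 1)).submatrix i.succAbove Fin.succ).det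
      = if i = Fin.last r' then (-1 : K) ^ (i : ℕ) * (-c 0) *
      ((compMat c (r' + 1)).submatrix i.succAbove Fin.succ).det else 0 := by
    intro i
    by_cases h : i = Fin.last r'
    · simp only [h, if_true, compMat]
      simp [Fin.val_last]
    · have hi : (i : ℕ) + 1 ≠ r' + 1 := by
        intro hc'; apply h; ext; simp [Fin.val_last]; omega
      simp [compMat, hi, h, Fin.val_zero]
      intro hc'; exact absurd hc' (by omega)
  rw [Finset.sum_congr rfl (fun i _ => h1 i), Finset.sum_ite_eq']
  simp only [Finset.mem_univ, if_true]
  have h2 : ((compMat c (r' + 1)).submatrix (Fin.last r').succAbove Fin.succ) = 1 := by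
    funext i j
    simp only [submatrix_apply, Fin.succAbove_last, compMat]
    have hi : ((Fin.castSucc i : Fin (r' + 1)) : ℕ) + 1 ≠ r' + 1 := by
      simp [Fin.coe_castSucc]; omega
    simp only [hi, if_false]
    by_cases hij : i = j
    · simp [hij, Fin.val_succ, Matrix.one_apply]
    · have : ((Fin.succ j : Fin (r' + 1)) : ℕ) ≠ ((Fin.castSucc i : Fin (r' + 1)) : ℕ) + 1 := by
        simp [Fin.val_succ, Fin.coe_castSucc]
        intro hc'; apply hij; ext; omega
      simp only [this, if_false, Matrix.one_apply, hij]
  rw [h2, det_one]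
  simp only [mul_one]
  intro hz
  rcases mul_eq_zero.1 hz with h | h
  · exact pow_ne_zero _ (neg_ne_zero.2 one_ne_zero) h
  · exact hc (neg_eq_zero.1 h)

lemma kron_mulVec {r s : ℕ} (A : Matrix (Fin r) (Fin r) K) (B : Matrix (Fin s) (Fin s) K)
    (x : Fin r → K) (y : Fin s → K) :
    (A ⊗ₖ B) *ᵥ (fun p : Fin r × Fin s => x p.1 * y p.2)
      = fun p : Fin r × Fin s => (A *ᵥ x) p.1 * (B *ᵥ y) p.2 := by
  funext p
  simp only [mulVec, dotProduct, kroneckerMap_apply]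
  rw [Finset.sum_mul_sum]
  rw [← Finset.sum_product']
  rw [show ((Finset.univ : Finset (Fin r)) ×ˢ (Finset.univ : Finset (Fin s)))
      = (Finset.univ : Finset (Fin r × Fin s)) from rfl]
  apply Finset.sum_congr rfl
  intro q _
  ring

end Aux

/-- A sequence `x : ℕ → K` is C-finite of order `r` if there exist constants
`c 0, …, c (r-1)` with `c 0 ≠ 0` such that
`x (n+r) + c (r-1) * x (n+r-1) + ⋯ + c 0 * x n = 0` for all `n`. -/
def IsCFiniteOfOrder {K : Type*} [Field K] (x : ℕ → K) (r : ℕ) : Prop :=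
  ∃ c : ℕ → K, c 0 ≠ 0 ∧
    ∀ n : ℕ, x (n + r) + ∑ i ∈ Finset.range r, c i * x (n + i) = 0

theorem cfinite_mul {K : Type*} [Field K] [CharZero K] (u v : ℕ → K) (r s : ℕ)
    (hu : IsCFiniteOfOrder u r) (hv : IsCFiniteOfOrder v s) :
    ∃ t ≤ r * s, IsCFiniteOfOrder (fun n => u n * v n) t := by
  obtain ⟨cu, hcu, hrecu⟩ := hu
  obtain ⟨cv, hcv, hrecv⟩ := hv
  -- trivial cases
  rcases Nat.eq_zero_or_pos r with hr | hr
  · subst hr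
    refine ⟨0, by omega, fun _ => 1, one_ne_zero, fun n => ?_⟩
    have := hrecu n
    simp at this ⊢
    simp [this]
  rcases Nat.eq_zero_or_pos s with hs | hs
  · subst hs
    refine ⟨0, by omega, fun _ => 1, one_ne_zero, fun n => ?_⟩
    have := hrecv n
    simp at this ⊢
    simp [this]
  -- main case
  set A := compMat cu r with hA
  set B := compMat cv s with hB
  set M : Matrix (Fin r × Fin s) (Fin r × Fin s) K := A ⊗ₖ B with hM
  have hdet : M.det ≠ 0 := by
    rw [hM, det_kronecker]
    exact mul_ne_zero (pow_ne_zero _ (compMat_det_ne_zero hcu hr))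
      (pow_ne_zero _ (compMat_det_ne_zero hcv hs))
  set W : ℕ → (Fin r × Fin s) → K := fun n p => u (n + p.1) * v (n + p.2) with hW
  have hstep : ∀ n, M *ᵥ W n = W (n + 1) := by
    intro n
    have := kron_mulVec A B (fun i : Fin r => u (n + i)) (fun j : Fin s => v (n + j))
    rw [hM]
    calc (A ⊗ₖ B) *ᵥ W n
        = fun p : Fin r × Fin s => (A *ᵥ fun i : Fin r => u (n + i)) p.1 *
            (B *ᵥ fun j : Fin s => v (n + j)) p.2 := this
      _ = W (n + 1) := by
          rw [hA, hB, compMat_mulVec hrecu n, compMat_mulVec hrecv n]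
  have hiter : ∀ n k, W (n + k) = (M ^ k) *ᵥ W n := by
    intro n k
    induction k with
    | zero => simp
    | succ k ih =>
        rw [← Nat.add_assoc, ← hstep (n + k), ih, mulVec_mulVec, ← pow_succ']
  -- characteristic polynomial
  set χ := M.charpoly with hχ
  have hcard : Fintype.card (Fin r × Fin s) = r * s := by simp
  have hdeg : χ.natDegree = r * s := by
    rw [hχ, charpoly_natDegree_eq_dim, hcard]
  have hlead : χ.coeff (r * s) = 1 := by
    have := M.charpoly_monic
    rw [Polynomial.Monic, Polynomial.leadingCoeff, hdeg] at this
    exact this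
  have hc0 : χ.coeff 0 ≠ 0 := by
    intro h
    apply hdet
    rw [M.det_eq_sign_charpoly_coeff, ← hχ, h, mul_zero]
  have hCH : ∑ i ∈ Finset.range (r * s + 1), χ.coeff i • M ^ i = 0 := by
    have := M.aeval_self_charpoly
    rw [aeval_eq_sum_range, hdeg] at this
    exact this
  refine ⟨r * s, le_refl _, fun i => χ.coeff i, hc0, fun n => ?_⟩
  set z : Fin r × Fin s := (⟨0, hr⟩, ⟨0, hs⟩) with hz
  have hwz : ∀ m, u m * v m = W m z := by
    intro m; simp [hW, hz]
  have key : ∑ i ∈ Finset.range (r * s + 1), χ.coeff i * W (n + i) z = 0 := by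
    have h1 : ∀ i, χ.coeff i * W (n + i) z = (χ.coeff i • (M ^ i *ᵥ W n)) z := by
      intro i
      rw [hiter n i]
      simp
    rw [Finset.sum_congr rfl (fun i _ => h1 i)]
    have h2 : ∀ i, χ.coeff i • (M ^ i *ᵥ W n) = (χ.coeff i • M ^ i) *ᵥ W n := by
      intro i; rw [smul_mulVec]
    simp only [h2]
    have h3 : ∑ i ∈ Finset.range (r * s + 1), ((χ.coeff i • M ^ i) *ᵥ W n)
        = (∑ i ∈ Finset.range (r * s + 1), χ.coeff i • M ^ i) *ᵥ W n := by
      exact (map_sum (mulVec.addMonoidHomLeft (W n)) _ _).symm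
    rw [← Finset.sum_apply, h3, hCH, zero_mulVec]
    rfl
  rw [Finset.sum_range_succ, hlead, one_mul, add_comm] at key
  simp only [hwz]
  rw [← key]
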